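/- Let S be the unilateral shift on ℓ²(ℕ) (S e_n = e_{n+1}) and d(λ) the diagonal operator d(λ) e_n = λⁿ e_n for a fixed λ ∈ ℂ with |λ| = 1 and λ ≠ 1. Then u := d(λ)·S and v := S are isometries satisfying u·v = λ·v·u, but u*·v ≠ conj(λ)·v·u*. -/

import Mathlib

open scoped InnerProductSpace

lemma ext_inner_basis' {H : Type*} [NormedAddCommGroup H] [InnerProductSpace ℂ H] [CompleteSpace H]
    (e : HilbertBasis ℕ ℂ H) {x y : H} (h : ∀ i, ⟪e i, x⟫_ℂ = ⟪e i, y⟫_ℂ) : x = y := by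
  apply e.repr.injective
  ext i
  rw [e.repr_apply_apply, e.repr_apply_apply, h]

lemma clm_ext_basis' {H : Type*} [NormedAddCommGroup H] [InnerProductSpace ℂ H] [CompleteSpace H]
    (e : HilbertBasis ℕ ℂ H) {A B : H →L[ℂ] H} (h : ∀ n, A (e n) = B (e n)) : A = B := by
  have hd : Dense (↑(Submodule.span ℂ (Set.range e)) : Set H) := by
    have h2 := e.dense_span
    rw [SetLike.ext'_iff, Submodule.topologicalClosure_coe] at h2
    rw [dense_iff_closure_eq, h2]
    simp
  apply ContinuousLinearMap.ext_on hd
  rintro x ⟨n, rfl⟩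
  exact h n

/-- With `S` the unilateral shift on `ℓ²(ℕ)` (given by `S e_n = e_{n+1}` on an orthonormal
Hilbert basis `e`) and `d(λ)` the diagonal operator `d(λ) e_n = λ^n e_n` for a unimodular
`λ ≠ 1`, the operators `u := d(λ) S` and `v := S` are isometries with `u v = λ • (v u)`
but `u* v ≠ conj(λ) • (v u*)`. -/
theorem stmt_1 {H : Type*} [NormedAddCommGroup H] [InnerProductSpace ℂ H] [CompleteSpace H]
    (e : HilbertBasis ℕ ℂ H) (l : ℂ) (hl : ‖l‖ = 1) (hl1 : l ≠ 1)
    (S D : H →L[ℂ] H)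
    (hS : ∀ n : ℕ, S (e n) = e (n + 1))
    (hD : ∀ n : ℕ, D (e n) = l ^ n • e n)
    (u v : H →L[ℂ] H) (hu : u = D * S) (hv : v = S) :
    star u * u = 1 ∧ star v * v = 1 ∧ u * v = l • (v * u) ∧
      star u * v ≠ (starRingEnd ℂ) l • (v * star u) := by
  have hon : ∀ i j : ℕ, ⟪e i, e j⟫_ℂ = if i = j then 1 else 0 := orthonormal_iff_ite.mp e.orthonormal
  have hue : ∀ n : ℕ, u (e n) = l ^ (n + 1) • e (n + 1) := by
    intro n
    simp [hu, ContinuousLinearMap.mul_apply, hS, hD]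
  have hll : (starRingEnd ℂ) l * l = 1 := by
    rw [RCLike.conj_mul, hl]; norm_num
  have hl0 : l ≠ 0 := by
    intro h; rw [h] at hl; simp at hl
  refine ⟨?_, ?_, ?_, ?_⟩
  · apply clm_ext_basis' e
    intro n
    apply ext_inner_basis' e
    intro m
    rw [ContinuousLinearMap.mul_apply, ContinuousLinearMap.one_apply,
      ContinuousLinearMap.star_eq_adjoint, ContinuousLinearMap.adjoint_inner_right,
      hue, hue, inner_smul_left, inner_smul_right, hon, hon]
    by_cases hmn : m = n
    · subst hmn
      simp [map_pow, ← mul_pow, hll]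
    · simp [hmn]
  · apply clm_ext_basis' e
    intro n
    apply ext_inner_basis' e
    intro m
    rw [ContinuousLinearMap.mul_apply, ContinuousLinearMap.one_apply,
      ContinuousLinearMap.star_eq_adjoint, ContinuousLinearMap.adjoint_inner_right,
      hv, hS, hS, hon, hon]
    by_cases hmn : m = n
    · subst hmn; simp
    · simp [hmn]
  · apply clm_ext_basis' e
    intro n
    rw [ContinuousLinearMap.mul_apply, ContinuousLinearMap.smul_apply,
      ContinuousLinearMap.mul_apply, hv, hS, hue, hue, map_smul, hS, smul_smul, pow_succ]
    ring_nf
  · intro hcontra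
    have h0 : (star u) (e 0) = 0 := by
      apply ext_inner_basis' e
      intro m
      rw [ContinuousLinearMap.star_eq_adjoint, ContinuousLinearMap.adjoint_inner_right,
        hue, inner_smul_left, hon]
      simp
    have h1 : (star u) (e 1) = (starRingEnd ℂ) l • e 0 := by
      apply ext_inner_basis' e
      intro m
      rw [ContinuousLinearMap.star_eq_adjoint, ContinuousLinearMap.adjoint_inner_right,
        hue, inner_smul_left, inner_smul_right, hon, hon]
      by_cases hm : m = 0
      · subst hm; simp
      · have : m + 1 ≠ 1 := by omega
        simp [hm, this]
    have key := congrArg (fun A : H →L[ℂ] H => A (e 0)) hcontra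
    simp only [ContinuousLinearMap.mul_apply, ContinuousLinearMap.smul_apply, hv, hS] at key
    rw [h1, h0, map_zero S, smul_zero] at key
    have he0 : (e 0 : H) ≠ 0 := by
      intro h
      have := hon 0 0
      rw [h] at this
      simp at this
    rw [smul_eq_zero] at key
    rcases key with h | h
    · exact hl0 (by simpa using congrArg (starRingEnd ℂ) h)
    · exact he0 h
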